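/- Let N be a positive integer, let H ∈ M_{2N}(ℂ) be Hermitian and positive definite, and let U ∈ M_{2N}(ℂ) be unitary. Then: (i) if U anticommutes with τ₃ (Uτ₃ = −τ₃U), then Uᴴ (τ₃H)* U ≠ τ₃H, so a time-reversal symmetry of the effective BdG Hamiltonian of a stable gapped free-boson system cannot anticommute with τ₃; (ii) if U commutes with τ₃ (Uτ₃ = τ₃U), then Uᴴ (τ₃H)* U ≠ −τ₃H, so a particle-hole symmetry cannot commute with τ₃; and (iii) if U commutes with τ₃, then Uᴴ (τ₃H) U ≠ −τ₃H, so a chiral symmetry cannot commute with τ₃. -/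

import Mathlib

open Matrix
open scoped ComplexOrder

/-- `τ₃ = σ₃ ⊗ 1_N`, the 2N×2N matrix with block form [[1, 0],[0, -1]]. -/
noncomputable def tau3 (N : ℕ) : Matrix (Fin N ⊕ Fin N) (Fin N ⊕ Fin N) ℂ :=
  Matrix.fromBlocks 1 0 0 (-1)

lemma tau3_conjTranspose (N : ℕ) : (tau3 N)ᴴ = tau3 N := by
  simp [tau3, fromBlocks_conjTranspose]

lemma tau3_transpose (N : ℕ) : (tau3 N)ᵀ = tau3 N := by
  simp [tau3, fromBlocks_transpose]

lemma tau3_sq (N : ℕ) : tau3 N * tau3 N = 1 := by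
  simp [tau3, fromBlocks_multiply, ← fromBlocks_one]

lemma posDef_conj {n : Type*} [Fintype n] [DecidableEq n]
    {A U : Matrix n n ℂ} (hA : A.PosDef) (hU : IsUnit U) :
    (Uᴴ * A * U).PosDef := by
  refine Matrix.PosDef.of_dotProduct_mulVec_pos (Matrix.isHermitian_conjTranspose_mul_mul U hA.1) fun x hx => ?_
  have hUx : U *ᵥ x ≠ 0 := fun h => hx <| by
    have hinj := Matrix.mulVec_injective_iff_isUnit.mpr hU
    exact hinj (by rw [h, Matrix.mulVec_zero])
  simpa only [star_mulVec, dotProduct_mulVec, vecMul_vecMul] using hA.dotProduct_mulVec_pos hUx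

lemma no_conj_neg {n : Type*} [Fintype n] [DecidableEq n] [Nonempty n]
    {A B U : Matrix n n ℂ} (hA : A.PosDef) (hB : B.PosDef)
    (hU : IsUnit U) : Uᴴ * A * U ≠ -B := by
  intro heq
  have hnB : (-B).PosDef := heq ▸ posDef_conj hA hU
  set v : n → ℂ := fun _ => 1 with hv
  have hv0 : v ≠ 0 := by
    intro h
    have := congrFun h (Classical.arbitrary n)
    simp [hv] at this
  have p1 := hnB.dotProduct_mulVec_pos hv0
  have p2 := hB.dotProduct_mulVec_pos hv0
  rw [Matrix.neg_mulVec, dotProduct_neg] at p1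
  exact lt_irrefl _ ((neg_pos.mp p1).trans p2)

/-- Threefold-way constraints for stable gapped free bosons: for `H` Hermitian
positive definite and `U` unitary, (i) a time-reversal symmetry of `τ₃H` cannot
anticommute with `τ₃`, (ii) a particle-hole symmetry cannot commute with `τ₃`,
and (iii) a chiral symmetry cannot commute with `τ₃`. -/
theorem stable_boson_symmetry_constraints (N : ℕ) (hN : 0 < N)
    (H : Matrix (Fin N ⊕ Fin N) (Fin N ⊕ Fin N) ℂ)
    (hherm : H.IsHermitian) (hpos : H.PosDef)
    (U : Matrix (Fin N ⊕ Fin N) (Fin N ⊕ Fin N) ℂ)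
    (hU : U ∈ Matrix.unitaryGroup (Fin N ⊕ Fin N) ℂ) :
    (U * tau3 N = -(tau3 N * U) →
      Uᴴ * (tau3 N * H).map (starRingEnd ℂ) * U ≠ tau3 N * H) ∧
    (U * tau3 N = tau3 N * U →
      Uᴴ * (tau3 N * H).map (starRingEnd ℂ) * U ≠ -(tau3 N * H)) ∧
    (U * tau3 N = tau3 N * U →
      Uᴴ * (tau3 N * H) * U ≠ -(tau3 N * H)) := by
  haveI : Nonempty (Fin N ⊕ Fin N) := ⟨Sum.inl ⟨0, hN⟩⟩
  have hUu : IsUnit U := ⟨⟨U, star U, hU.2, hU.1⟩, rfl⟩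
  have hmap : (tau3 N * H).map (starRingEnd ℂ) = tau3 N * Hᵀ := by
    have h1 : (tau3 N * H).map (starRingEnd ℂ) = ((tau3 N * H)ᴴ)ᵀ := by
      ext i j; rfl
    rw [h1, Matrix.conjTranspose_mul, hherm.eq, tau3_conjTranspose,
      Matrix.transpose_mul, tau3_transpose]
  have hsq := tau3_sq N
  refine ⟨?_, ?_, ?_⟩
  · intro hac heq
    have hac' : tau3 N * Uᴴ = -(Uᴴ * tau3 N) := by
      have := congrArg Matrix.conjTranspose hac
      simpa [Matrix.conjTranspose_mul, Matrix.conjTranspose_neg,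
        tau3_conjTranspose] using this
    have hac2 : Uᴴ * tau3 N = -(tau3 N * Uᴴ) := by rw [hac', neg_neg]
    rw [hmap, ← Matrix.mul_assoc Uᴴ, hac2] at heq
    have h3 : Uᴴ * Hᵀ * U = -H := by
      have := congrArg (fun X => tau3 N * X) heq
      simp only [Matrix.neg_mul, Matrix.mul_neg, ← Matrix.mul_assoc, hsq,
        Matrix.one_mul] at this
      exact neg_eq_iff_eq_neg.mp this
    exact no_conj_neg hpos.transpose hpos hUu h3
  · intro hc heq
    have hc' : tau3 N * Uᴴ = Uᴴ * tau3 N := by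
      have := congrArg Matrix.conjTranspose hc
      simpa [Matrix.conjTranspose_mul, tau3_conjTranspose] using this
    rw [hmap, ← Matrix.mul_assoc Uᴴ, ← hc'] at heq
    have h3 : Uᴴ * Hᵀ * U = -H := by
      have := congrArg (fun X => tau3 N * X) heq
      simp only [Matrix.neg_mul, Matrix.mul_neg, ← Matrix.mul_assoc, hsq,
        Matrix.one_mul] at this
      exact this
    exact no_conj_neg hpos.transpose hpos hUu h3
  · intro hc heq
    have hc' : tau3 N * Uᴴ = Uᴴ * tau3 N := by
      have := congrArg Matrix.conjTranspose hc
      simpa [Matrix.conjTranspose_mul, tau3_conjTranspose] using this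
    rw [← Matrix.mul_assoc Uᴴ, ← hc'] at heq
    have h3 : Uᴴ * H * U = -H := by
      have := congrArg (fun X => tau3 N * X) heq
      simp only [Matrix.neg_mul, Matrix.mul_neg, ← Matrix.mul_assoc, hsq,
        Matrix.one_mul] at this
      exact this
    exact no_conj_neg hpos hpos hUu h3
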